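/- Let λ > 0 and let h : ℕ → ℝ satisfy Σ_{i≥0} λ^i |h(i)| / i! < ∞. Define f_h(x) = ((x-1)!/λ^x) · Σ_{i=x}^∞ (λ^i/i!)·(h(i) − P_λ(h)) for x ≥ 1, where P_λ(h) = e^{-λ} Σ_{i≥0} λ^i h(i)/i!. Then for every x ∈ ℕ with x ≥ 1 (and for x = 0 with f_h(0) arbitrary, using the equation at x = 0 directly), f_h satisfies Stein's equation: x·f_h(x) − λ·f_h(x+1) = h(x) − P_λ(h) for all x ≥ 1. -/

import Mathlib

noncomputable section

/-- Poisson-`λ` expectation of `h`: `P_λ(h) = e^{-λ} Σ_{i≥0} λ^i h(i)/i!`. -/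
def poissonExp (lam : ℝ) (h : ℕ → ℝ) : ℝ :=
  Real.exp (-lam) * ∑' i : ℕ, lam ^ i * h i / (i.factorial : ℝ)

/-- The Stein solution `f_h(x) = ((x−1)!/λ^x)·Σ_{i=x}^∞ (λ^i/i!)(h(i) − P_λ(h))`
(written with the shifted index `i = x + j`). -/
def steinSol (lam : ℝ) (h : ℕ → ℝ) (x : ℕ) : ℝ :=
  ((x - 1).factorial : ℝ) / lam ^ x *
    ∑' j : ℕ, lam ^ (x + j) * (h (x + j) - poissonExp lam h) / ((x + j).factorial : ℝ)

/-- `f_h` satisfies Stein's equation `x·f_h(x) − λ·f_h(x+1) = h(x) − P_λ(h)` for `x ≥ 1`. -/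
theorem steinSol_solves_stein (lam : ℝ) (hlam : 0 < lam) (h : ℕ → ℝ)
    (hsum : Summable fun i : ℕ => lam ^ i * |h i| / (i.factorial : ℝ)) :
    ∀ x : ℕ, 1 ≤ x →
      (x : ℝ) * steinSol lam h x - lam * steinSol lam h (x + 1) = h x - poissonExp lam h := by
  intro x hx
  set P : ℝ := poissonExp lam h with hP
  set F : ℕ → ℝ := fun i => lam ^ i * (h i - P) / (i.factorial : ℝ) with hFdef
  have hsum1 : Summable fun i : ℕ => lam ^ i * h i / (i.factorial : ℝ) := by
    apply Summable.of_abs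
    refine hsum.congr fun i => ?_
    rw [abs_div, abs_mul, abs_of_nonneg (pow_nonneg hlam.le i),
      abs_of_nonneg (by positivity : (0:ℝ) ≤ (i.factorial : ℝ))]
  have hsum2 : Summable fun i : ℕ => lam ^ i * P / (i.factorial : ℝ) := by
    have := (Real.summable_pow_div_factorial lam).mul_right P
    refine this.congr fun i => ?_
    ring
  have hF : Summable F := by
    refine (hsum1.sub hsum2).congr fun i => ?_
    simp only [hFdef]
    ring
  have hshift : ∀ y : ℕ, Summable fun j : ℕ => F (y + j) := fun y =>
    hF.comp_injective (add_right_injective y)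
  have hsplit : (∑' j : ℕ, F (x + j)) = F x + ∑' j : ℕ, F (x + 1 + j) := by
    rw [(hshift x).tsum_eq_zero_add]
    congr 1
    exact tsum_congr fun j => by rw [show x + (j + 1) = x + 1 + j by omega]
  have hfx : steinSol lam h x =
      ((x - 1).factorial : ℝ) / lam ^ x * (F x + ∑' j : ℕ, F (x + 1 + j)) := by
    rw [steinSol, ← hsplit]
  have hfx1 : steinSol lam h (x + 1) =
      ((x).factorial : ℝ) / lam ^ (x + 1) * (∑' j : ℕ, F (x + 1 + j)) := by
    rw [steinSol]
    simp
    left; rfl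
  rw [hfx, hfx1]
  obtain ⟨y, rfl⟩ : ∃ y : ℕ, x = y + 1 := ⟨x - 1, (Nat.succ_pred_eq_of_pos hx).symm⟩
  simp only [Nat.add_sub_cancel, hFdef]
  have hfac : ((y + 1).factorial : ℝ) = (y + 1 : ℕ) * (y.factorial : ℝ) := by
    rw [Nat.factorial_succ]; push_cast; ring
  have hlne : lam ^ (y + 1) ≠ 0 := pow_ne_zero _ hlam.ne'
  have hfne : ((y + 1).factorial : ℝ) ≠ 0 := Nat.cast_ne_zero.mpr (Nat.factorial_ne_zero _)
  field_simp
  rw [hfac]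
  push_cast
  ring

end
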